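/- Let μ be a finite positive Borel measure on ℝ and let x ∈ ℝ be such that μ(B(x;ε)) > 0 for every ε > 0. Then liminf_{t→∞} ln(∫_ℝ e^(−2t|x−y|) dμ(y))/ln t = −d⁺_μ(x) and limsup_{t→∞} ln(∫_ℝ e^(−2t|x−y|) dμ(y))/ln t = −d⁻_μ(x). -/

import Mathlib

open MeasureTheory Filter Set Metric
open scoped ENNReal Topology Classical

noncomputable section

/-- `μ` is uniformly `α`-Hölder continuous: there is `C > 0` with
`μ(I) < C |I|^α` for every (nondegenerate) interval `I` with `|I| < 1`. -/
def UnifHolder (μ : Measure ℝ) (α : ℝ) : Prop :=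
  ∃ C > (0 : ℝ), ∀ a b : ℝ, a < b → b - a < 1 →
    μ (Set.Icc a b) < ENNReal.ofReal (C * (b - a) ^ α)

/-- The Fourier transform `μ̂(s) = ∫ e^{-isx} dμ(x)` of a finite Borel measure on `ℝ`. -/
def measureFT (μ : Measure ℝ) (s : ℝ) : ℂ :=
  ∫ x : ℝ, Complex.exp (-(s * x) * Complex.I) ∂μ

/-- The time-average quantum return probability
`W_μ(t) = (1/t) ∫_0^t |μ̂(s)|² ds`. -/
def Wavg (μ : Measure ℝ) (t : ℝ) : ℝ :=
  (1 / t) * ∫ s in Set.Ioc (0 : ℝ) t, ‖measureFT μ s‖ ^ 2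

/-- `μ` is the spectral measure of the pair `(T, ψ)`: it is finite, vanishes outside
the spectrum of `T`, and `∫ f dμ = ⟨ψ, f(T)ψ⟩` for every continuous `f : ℝ → ℝ`,
where `f(T)` is given by the continuous functional calculus. -/
def IsSpectralMeasure {H : Type*} [NormedAddCommGroup H] [InnerProductSpace ℂ H]
    [CompleteSpace H] (T : H →L[ℂ] H) (ψ : H) (μ : Measure ℝ) : Prop :=
  IsFiniteMeasure μ ∧ μ {x : ℝ | (x : ℂ) ∉ spectrum ℂ T} = 0 ∧
    ∀ f : C(ℝ, ℝ), ∫ x, f x ∂μ = (inner ℂ ψ ((cfc (f : ℝ → ℝ) T) ψ) : ℂ).re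

/-- The real part of the spectrum of a bounded operator. -/
def realSpectrum {H : Type*} [NormedAddCommGroup H] [InnerProductSpace ℂ H]
    [CompleteSpace H] (T : H →L[ℂ] H) : Set ℝ :=
  {x : ℝ | (x : ℂ) ∈ spectrum ℂ T}

/-- `μ` is `α`-Hausdorff continuous: `μ(Λ) = 0` for every Borel set `Λ` with
`h^α(Λ) = 0`. -/
def HausdorffCont (μ : Measure ℝ) (α : ℝ) : Prop :=
  ∀ Λ : Set ℝ, MeasurableSet Λ → μH[α] Λ = 0 → μ Λ = 0

/-- The lower pointwise scaling exponent `d⁻_μ(x)`, with value `∞` when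
`μ(B(x;ε)) = 0` for some `ε > 0`. -/
def dLow (μ : Measure ℝ) (x : ℝ) : EReal :=
  if ∃ ε > (0 : ℝ), μ (Metric.ball x ε) = 0 then ⊤
  else Filter.liminf
    (fun ε : ℝ => ((Real.log (μ (Metric.ball x ε)).toReal / Real.log ε : ℝ) : EReal))
    (𝓝[>] (0 : ℝ))

/-- The upper pointwise scaling exponent `d⁺_μ(x)`, with value `∞` when
`μ(B(x;ε)) = 0` for some `ε > 0`. -/
def dUp (μ : Measure ℝ) (x : ℝ) : EReal :=
  if ∃ ε > (0 : ℝ), μ (Metric.ball x ε) = 0 then ⊤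
  else Filter.limsup
    (fun ε : ℝ => ((Real.log (μ (Metric.ball x ε)).toReal / Real.log ε : ℝ) : EReal))
    (𝓝[>] (0 : ℝ))

/-- The lower correlation dimension `D⁻_μ(2)`. -/
def DLow2 (μ : Measure ℝ) : EReal :=
  Filter.liminf
    (fun ε : ℝ =>
      ((Real.log (∫ x, (μ (Metric.ball x ε)).toReal ∂μ) / Real.log ε : ℝ) : EReal))
    (𝓝[>] (0 : ℝ))

/-- The upper correlation dimension `D⁺_μ(2)`. -/
def DUp2 (μ : Measure ℝ) : EReal :=
  Filter.limsup
    (fun ε : ℝ =>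
      ((Real.log (∫ x, (μ (Metric.ball x ε)).toReal ∂μ) / Real.log ε : ℝ) : EReal))
    (𝓝[>] (0 : ℝ))

/-- A set is generic (residual / comeagre in the Baire sense used in the paper)
if it contains a dense `G_δ` set. -/
def Generic {X : Type*} [TopologicalSpace X] (A : Set X) : Prop :=
  ∃ S : Set X, S ⊆ A ∧ IsGδ S ∧ Dense S


private lemma stmt18_map_inv : Filter.map (fun t : ℝ => t⁻¹) atTop = 𝓝[>] (0 : ℝ) := by
  refine le_antisymm tendsto_inv_atTop_nhdsGT_zero ?_
  have h : Filter.map (fun t : ℝ => t⁻¹) (𝓝[>] (0 : ℝ)) ≤ atTop := tendsto_inv_nhdsGT_zero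
  have h2 := Filter.map_mono (m := fun t : ℝ => t⁻¹) h
  rwa [Filter.map_map, show ((fun t : ℝ => t⁻¹) ∘ fun t : ℝ => t⁻¹) = id by
    funext t; simp, Filter.map_id] at h2

private lemma stmt18_le_of_forall (a b : EReal)
    (h : ∀ c : ℝ, b < (c : EReal) → a ≤ (c : EReal)) : a ≤ b := by
  by_contra hab
  obtain ⟨y, hy1, hy2⟩ := EReal.exists_between_coe_real (not_le.1 hab)
  exact absurd (h y hy1) (not_le.2 hy2)

private lemma stmt18_le_of_forall' (a b : EReal)
    (h : ∀ c : ℝ, (c : EReal) < b → (c : EReal) ≤ a) : b ≤ a := by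
  by_contra hab
  obtain ⟨y, hy1, hy2⟩ := EReal.exists_between_coe_real (not_le.1 hab)
  exact absurd (h y hy2) (not_le.2 hy1)

private lemma stmt18_integrable (μ : Measure ℝ) [IsFiniteMeasure μ] (x : ℝ) {t : ℝ}
    (ht : 0 ≤ t) : Integrable (fun y : ℝ => Real.exp (-2 * t * |x - y|)) μ := by
  have hc : Continuous fun y : ℝ => Real.exp (-2 * t * |x - y|) :=
    Real.continuous_exp.comp (continuous_const.mul ((continuous_const.sub continuous_id).abs))
  refine (integrable_const (1 : ℝ)).mono' hc.aestronglyMeasurable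
    (Eventually.of_forall fun y => ?_)
  rw [Real.norm_eq_abs, abs_of_pos (Real.exp_pos _)]
  refine Real.exp_le_one_iff.2 ?_
  nlinarith [abs_nonneg (x - y)]

private lemma stmt18_lemA (μ : Measure ℝ) [IsFiniteMeasure μ] (x : ℝ) {t : ℝ} (ht : 0 < t) :
    Real.exp (-2) * (μ (Metric.ball x t⁻¹)).toReal ≤
      ∫ y : ℝ, Real.exp (-2 * t * |x - y|) ∂μ := by
  have hint := stmt18_integrable μ x ht.le
  have h1 : ∫ y in Metric.ball x t⁻¹, Real.exp (-2 * t * |x - y|) ∂μ ≤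
      ∫ y : ℝ, Real.exp (-2 * t * |x - y|) ∂μ :=
    setIntegral_le_integral hint (Eventually.of_forall fun y => (Real.exp_pos _).le)
  refine le_trans ?_ h1
  refine setIntegral_ge_of_const_le_real measurableSet_ball (measure_ne_top μ _)
    (fun y hy => ?_) hint.integrableOn
  refine Real.exp_le_exp.2 ?_
  have hyx : |x - y| < t⁻¹ := by
    rw [Metric.mem_ball, Real.dist_eq, abs_sub_comm] at hy; exact hy
  have h2 : t * |x - y| ≤ t * t⁻¹ := mul_le_mul_of_nonneg_left hyx.le ht.le
  rw [mul_inv_cancel₀ ht.ne'] at h2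
  nlinarith

private lemma stmt18_lemB (μ : Measure ℝ) [IsFiniteMeasure μ] (x : ℝ) {s R : ℝ}
    (hs : 0 < s) (hR : 0 < R) :
    ∫ y : ℝ, Real.exp (-2 * s * |x - y|) ∂μ ≤
      (μ (Metric.ball x R)).toReal + Real.exp (-(2 * s * R)) * (μ Set.univ).toReal := by
  have hint := stmt18_integrable μ x hs.le
  rw [← integral_add_compl (measurableSet_ball (x := x) (ε := R)) hint]
  refine add_le_add ?_ ?_
  · calc ∫ y in Metric.ball x R, Real.exp (-2 * s * |x - y|) ∂μ
        ≤ ∫ _ in Metric.ball x R, (1 : ℝ) ∂μ :=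
          setIntegral_mono_on hint.integrableOn (integrable_const 1).integrableOn
            measurableSet_ball (fun y _ => Real.exp_le_one_iff.2
              (by nlinarith [abs_nonneg (x - y)]))
      _ = (μ (Metric.ball x R)).toReal := by simp; rfl
  · calc ∫ y in (Metric.ball x R)ᶜ, Real.exp (-2 * s * |x - y|) ∂μ
        ≤ ∫ _ in (Metric.ball x R)ᶜ, Real.exp (-(2 * s * R)) ∂μ := by
          refine setIntegral_mono_on hint.integrableOn (integrable_const _).integrableOn
            measurableSet_ball.compl (fun y hy => ?_)
          have hyx : R ≤ |x - y| := by
            rw [Set.mem_compl_iff, Metric.mem_ball, Real.dist_eq, abs_sub_comm, not_lt] at hy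
            exact hy
          refine Real.exp_le_exp.2 (by nlinarith)
      _ = (μ (Metric.ball x R)ᶜ).toReal * Real.exp (-(2 * s * R)) := by
          simp [smul_eq_mul]; rfl
      _ ≤ Real.exp (-(2 * s * R)) * (μ Set.univ).toReal := by
          rw [mul_comm]
          refine mul_le_mul_of_nonneg_left ?_ (Real.exp_pos _).le
          exact ENNReal.toReal_mono (measure_ne_top μ _) (measure_mono (Set.subset_univ _))

private lemma stmt18_F_pos (μ : Measure ℝ) [IsFiniteMeasure μ] (x : ℝ)
    (hx : ∀ ε > (0 : ℝ), 0 < μ (Metric.ball x ε)) {t : ℝ} (ht : 0 < t) :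
    0 < ∫ y : ℝ, Real.exp (-2 * t * |x - y|) ∂μ := by
  refine lt_of_lt_of_le ?_ (stmt18_lemA μ x ht)
  have hM := ENNReal.toReal_pos (hx t⁻¹ (inv_pos.2 ht)).ne' (measure_ne_top μ _)
  positivity

private lemma stmt18_F_le (μ : Measure ℝ) [IsFiniteMeasure μ] (x : ℝ) {t : ℝ} (ht : 0 ≤ t) :
    ∫ y : ℝ, Real.exp (-2 * t * |x - y|) ∂μ ≤ (μ Set.univ).toReal := by
  calc ∫ y : ℝ, Real.exp (-2 * t * |x - y|) ∂μ ≤ ∫ _ : ℝ, (1 : ℝ) ∂μ :=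
        integral_mono (stmt18_integrable μ x ht) (integrable_const 1)
          (fun y => Real.exp_le_one_iff.2 (by nlinarith [abs_nonneg (x - y)]))
    _ = (μ Set.univ).toReal := by simp; rfl

private lemma stmt18_evlog (C γ' : ℝ) (hγ'0 : 0 < γ') {κ : ℝ} (hκ : 0 < κ) :
    ∀ᶠ t : ℝ in atTop, Real.log C + γ' * Real.log t ≤ 2 * t ^ κ := by
  have hhalf : 0 < κ / 2 := by linarith
  filter_upwards [(tendsto_rpow_atTop hhalf).eventually_ge_atTop
      (|Real.log C| + γ' * (2 / κ) + 2), eventually_gt_atTop (1 : ℝ)] with t hA ht1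
  have ht0 : (0 : ℝ) < t := by linarith
  set X := t ^ (κ / 2) with hX
  have hX0 : 0 < X := Real.rpow_pos_of_pos ht0 _
  have h1 : (1 : ℝ) ≤ X := by
    have h2 : 0 ≤ |Real.log C| + γ' * (2 / κ) := by positivity
    linarith
  have hlt : Real.log t ≤ (2 / κ) * X := by
    have h2 := Real.log_le_sub_one_of_pos hX0
    rw [hX, Real.log_rpow ht0] at h2
    calc Real.log t = (2 / κ) * (κ / 2 * Real.log t) := by field_simp
      _ ≤ (2 / κ) * X := by
          refine mul_le_mul_of_nonneg_left ?_ (by positivity)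
          linarith
  have hts : X * X = t ^ κ := by
    rw [hX, ← Real.rpow_add ht0]; ring_nf
  have h5 : Real.log C + γ' * Real.log t ≤ |Real.log C| * X + γ' * (2 / κ) * X := by
    have h6 : γ' * Real.log t ≤ γ' * ((2 / κ) * X) := mul_le_mul_of_nonneg_left hlt hγ'0.le
    have h7 : |Real.log C| ≤ |Real.log C| * X := le_mul_of_one_le_right (abs_nonneg _) h1
    have h8 := le_abs_self (Real.log C)
    nlinarith
  have h9 : |Real.log C| * X + γ' * (2 / κ) * X ≤ X * X := by nlinarith
  nlinarith

private lemma stmt18_coreU (μ : Measure ℝ) [IsFiniteMeasure μ] (x : ℝ)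
    (hx : ∀ ε > (0 : ℝ), 0 < μ (Metric.ball x ε)) {γ γ' : ℝ} (h0 : 0 < γ) (hγ : γ < γ') :
    ∀ᶠ t : ℝ in atTop,
      (γ' < Real.log ((μ (Metric.ball x t⁻¹)).toReal) / Real.log t⁻¹ →
        Real.log (∫ y : ℝ, Real.exp (-2 * t ^ (2 * γ' / (γ' + γ)) * |x - y|) ∂μ) /
          Real.log (t ^ (2 * γ' / (γ' + γ))) ≤ -γ) := by
  set e : ℝ := 2 * γ' / (γ' + γ) with he
  have hsum : 0 < γ' + γ := by linarith
  have hγ'0 : 0 < γ' := by linarith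
  have he1 : 1 < e := by rw [he, lt_div_iff₀ hsum]; linarith
  have he0 : 0 < e := by linarith
  have hκ : 0 < e - 1 := by linarith
  have hηlt : γ * e < γ' := by
    have h2 : γ * (2 * γ') < γ' * (γ' + γ) := by nlinarith
    calc γ * e = γ * (2 * γ') / (γ' + γ) := by rw [he]; ring
      _ < γ' := by rw [div_lt_iff₀ hsum]; nlinarith
  have hη : 0 < γ' - γ * e := by linarith
  set C : ℝ := (μ Set.univ).toReal with hCdef
  have hC : 0 < C := ENNReal.toReal_pos
    (((hx 1 one_pos).trans_le (measure_mono (Set.subset_univ _))).ne')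
    (measure_ne_top μ _)
  have hev2 : ∀ᶠ t : ℝ in atTop, Real.log 2 ≤ (γ' - γ * e) * Real.log t := by
    filter_upwards [Real.tendsto_log_atTop.eventually_ge_atTop (Real.log 2 / (γ' - γ * e))]
      with t ht
    rw [div_le_iff₀ hη] at ht
    linarith
  filter_upwards [eventually_gt_atTop (1 : ℝ), hev2, stmt18_evlog C γ' hγ'0 hκ] with t ht1 ht2 ht3 hG
  have ht0 : (0 : ℝ) < t := lt_trans one_pos ht1
  have hlt0 : 0 < Real.log t := Real.log_pos ht1
  have hM0 : 0 < (μ (Metric.ball x t⁻¹)).toReal :=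
    ENNReal.toReal_pos (hx _ (inv_pos.2 ht0)).ne' (measure_ne_top μ _)
  rw [Real.log_inv, div_neg] at hG
  have hG2 : Real.log ((μ (Metric.ball x t⁻¹)).toReal) / Real.log t < -γ' := lt_neg.1 hG
  have hMlt : Real.log ((μ (Metric.ball x t⁻¹)).toReal) < -(γ' * Real.log t) := by
    rw [div_lt_iff₀ hlt0] at hG2; linarith [hG2]
  have hM2 : (μ (Metric.ball x t⁻¹)).toReal ≤ Real.exp (-(γ' * Real.log t)) := by
    rw [← Real.exp_log hM0]; exact Real.exp_le_exp.2 hMlt.le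
  have hse : (0 : ℝ) < t ^ e := Real.rpow_pos_of_pos ht0 e
  have hB := stmt18_lemB μ x (s := t ^ e) (R := t⁻¹) hse (inv_pos.2 ht0)
  have hpow : t ^ e * t⁻¹ = t ^ (e - 1) := by
    rw [← Real.rpow_neg_one t, ← Real.rpow_add ht0]; ring_nf
  have hE : Real.exp (-(2 * t ^ e * t⁻¹)) * C ≤ Real.exp (-(γ' * Real.log t)) := by
    rw [mul_assoc, hpow]
    calc Real.exp (-(2 * t ^ (e - 1))) * C
        = Real.exp (-(2 * t ^ (e - 1)) + Real.log C) := by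
          rw [Real.exp_add, Real.exp_log hC]
      _ ≤ Real.exp (-(γ' * Real.log t)) := Real.exp_le_exp.2 (by linarith)
  have hF2 : (∫ y : ℝ, Real.exp (-2 * t ^ e * |x - y|) ∂μ) ≤
      2 * Real.exp (-(γ' * Real.log t)) := by
    calc (∫ y : ℝ, Real.exp (-2 * t ^ e * |x - y|) ∂μ)
        ≤ (μ (Metric.ball x t⁻¹)).toReal + Real.exp (-(2 * t ^ e * t⁻¹)) * C := hB
      _ ≤ 2 * Real.exp (-(γ' * Real.log t)) := by linarith
  have hFpos : 0 < ∫ y : ℝ, Real.exp (-2 * t ^ e * |x - y|) ∂μ := stmt18_F_pos μ x hx hse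
  have hlogF : Real.log (∫ y : ℝ, Real.exp (-2 * t ^ e * |x - y|) ∂μ) ≤
      Real.log 2 - γ' * Real.log t := by
    calc Real.log (∫ y : ℝ, Real.exp (-2 * t ^ e * |x - y|) ∂μ)
        ≤ Real.log (2 * Real.exp (-(γ' * Real.log t))) := Real.log_le_log hFpos hF2
      _ = Real.log 2 + -(γ' * Real.log t) := by
          rw [Real.log_mul two_ne_zero (Real.exp_ne_zero _), Real.log_exp]
      _ = Real.log 2 - γ' * Real.log t := by ring
  rw [Real.log_rpow ht0, div_le_iff₀ (by positivity)]
  nlinarith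

private lemma stmt18_keyU (μ : Measure ℝ) [IsFiniteMeasure μ] (x : ℝ)
    (hx : ∀ ε > (0 : ℝ), 0 < μ (Metric.ball x ε)) {γ γ' : ℝ} (h0 : 0 < γ) (hγ : γ < γ')
    (hfr : ∃ᶠ t : ℝ in atTop,
      γ' < Real.log ((μ (Metric.ball x t⁻¹)).toReal) / Real.log t⁻¹) :
    Filter.liminf (fun t : ℝ =>
        ((Real.log (∫ y : ℝ, Real.exp (-2 * t * |x - y|) ∂μ) / Real.log t : ℝ) : EReal))
        Filter.atTop ≤ ((-γ : ℝ) : EReal) := by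
  set e : ℝ := 2 * γ' / (γ' + γ) with he
  have he0 : 0 < e := div_pos (by linarith) (by linarith)
  have hfr2 : ∃ᶠ t : ℝ in atTop,
      Real.log (∫ y : ℝ, Real.exp (-2 * t ^ e * |x - y|) ∂μ) / Real.log (t ^ e) ≤ -γ :=
    hfr.mp (stmt18_coreU μ x hx h0 hγ)
  have hfr3 : ∃ᶠ s : ℝ in atTop,
      Real.log (∫ y : ℝ, Real.exp (-2 * s * |x - y|) ∂μ) / Real.log s ≤ -γ :=
    (tendsto_rpow_atTop he0).frequently hfr2
  refine liminf_le_of_frequently_le ?_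
  exact hfr3.mono fun t ht => EReal.coe_le_coe_iff.2 ht

private lemma stmt18_keyU' (μ : Measure ℝ) [IsFiniteMeasure μ] (x : ℝ)
    (hx : ∀ ε > (0 : ℝ), 0 < μ (Metric.ball x ε)) {γ γ' : ℝ} (h0 : 0 < γ) (hγ : γ < γ')
    (hev : ∀ᶠ t : ℝ in atTop,
      γ' < Real.log ((μ (Metric.ball x t⁻¹)).toReal) / Real.log t⁻¹) :
    Filter.limsup (fun t : ℝ =>
        ((Real.log (∫ y : ℝ, Real.exp (-2 * t * |x - y|) ∂μ) / Real.log t : ℝ) : EReal))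
        Filter.atTop ≤ ((-γ : ℝ) : EReal) := by
  set e : ℝ := 2 * γ' / (γ' + γ) with he
  have he0 : 0 < e := div_pos (by linarith) (by linarith)
  have hev2 : ∀ᶠ t : ℝ in atTop,
      Real.log (∫ y : ℝ, Real.exp (-2 * t ^ e * |x - y|) ∂μ) / Real.log (t ^ e) ≤ -γ :=
    hev.mp (stmt18_coreU μ x hx h0 hγ)
  have hev3 : ∀ᶠ s : ℝ in atTop,
      Real.log (∫ y : ℝ, Real.exp (-2 * s * |x - y|) ∂μ) / Real.log s ≤ -γ := by
    filter_upwards [(tendsto_rpow_atTop (by positivity : (0:ℝ) < 1 / e)).eventually hev2,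
      eventually_gt_atTop (0 : ℝ)] with s hs hs0
    rwa [← Real.rpow_mul hs0.le, one_div, inv_mul_cancel₀ he0.ne', Real.rpow_one] at hs
  refine limsup_le_of_le ?_ ?_
  · isBoundedDefault
  · exact hev3.mono fun t ht => EReal.coe_le_coe_iff.2 ht

private lemma stmt18_coreL (μ : Measure ℝ) [IsFiniteMeasure μ] (x : ℝ)
    (hx : ∀ ε > (0 : ℝ), 0 < μ (Metric.ball x ε)) {γ γ' : ℝ} (hγ : γ' < γ) :
    ∀ᶠ t : ℝ in atTop,
      (Real.log ((μ (Metric.ball x t⁻¹)).toReal) / Real.log t⁻¹ < γ' →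
        -γ ≤ Real.log (∫ y : ℝ, Real.exp (-2 * t * |x - y|) ∂μ) / Real.log t) := by
  filter_upwards [eventually_gt_atTop (1 : ℝ),
    Real.tendsto_log_atTop.eventually_ge_atTop (2 / (γ - γ'))] with t ht1 ht2 hG
  have ht0 : (0 : ℝ) < t := lt_trans one_pos ht1
  have hlt0 : 0 < Real.log t := Real.log_pos ht1
  have hM0 : 0 < (μ (Metric.ball x t⁻¹)).toReal :=
    ENNReal.toReal_pos (hx _ (inv_pos.2 ht0)).ne' (measure_ne_top μ _)
  rw [Real.log_inv, div_neg] at hG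
  have hG2 : -γ' < Real.log ((μ (Metric.ball x t⁻¹)).toReal) / Real.log t := neg_lt.2 hG
  have h3 : -(γ' * Real.log t) ≤ Real.log ((μ (Metric.ball x t⁻¹)).toReal) := by
    rw [lt_div_iff₀ hlt0] at hG2; nlinarith
  have hA := stmt18_lemA μ x ht0
  have hFpos : 0 < ∫ y : ℝ, Real.exp (-2 * t * |x - y|) ∂μ := stmt18_F_pos μ x hx ht0
  have h4 : Real.exp (-2 + -(γ' * Real.log t)) ≤ ∫ y : ℝ, Real.exp (-2 * t * |x - y|) ∂μ := by
    rw [Real.exp_add]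
    calc Real.exp (-2) * Real.exp (-(γ' * Real.log t))
        ≤ Real.exp (-2) * (μ (Metric.ball x t⁻¹)).toReal := by
          refine mul_le_mul_of_nonneg_left ?_ (Real.exp_pos _).le
          rw [← Real.exp_log hM0]
          exact Real.exp_le_exp.2 h3
      _ ≤ _ := hA
  have h5 : -2 + -(γ' * Real.log t) ≤ Real.log (∫ y : ℝ, Real.exp (-2 * t * |x - y|) ∂μ) := by
    have h6 := Real.log_le_log (Real.exp_pos _) h4
    rwa [Real.log_exp] at h6
  rw [le_div_iff₀ hlt0]
  have h6 : 2 ≤ (γ - γ') * Real.log t := by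
    rw [div_le_iff₀ (by linarith : (0:ℝ) < γ - γ')] at ht2
    nlinarith
  nlinarith

private lemma stmt18_keyL1 (μ : Measure ℝ) [IsFiniteMeasure μ] (x : ℝ)
    (hx : ∀ ε > (0 : ℝ), 0 < μ (Metric.ball x ε)) {γ γ' : ℝ} (hγ : γ' < γ)
    (hev : ∀ᶠ t : ℝ in atTop,
      Real.log ((μ (Metric.ball x t⁻¹)).toReal) / Real.log t⁻¹ < γ') :
    ((-γ : ℝ) : EReal) ≤ Filter.liminf (fun t : ℝ =>
        ((Real.log (∫ y : ℝ, Real.exp (-2 * t * |x - y|) ∂μ) / Real.log t : ℝ) : EReal))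
        Filter.atTop := by
  refine le_liminf_of_le ?_ ?_
  · isBoundedDefault
  · exact (hev.mp (stmt18_coreL μ x hx hγ)).mono fun t ht => EReal.coe_le_coe_iff.2 ht

private lemma stmt18_keyL2 (μ : Measure ℝ) [IsFiniteMeasure μ] (x : ℝ)
    (hx : ∀ ε > (0 : ℝ), 0 < μ (Metric.ball x ε)) {γ γ' : ℝ} (hγ : γ' < γ)
    (hfr : ∃ᶠ t : ℝ in atTop,
      Real.log ((μ (Metric.ball x t⁻¹)).toReal) / Real.log t⁻¹ < γ') :
    ((-γ : ℝ) : EReal) ≤ Filter.limsup (fun t : ℝ =>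
        ((Real.log (∫ y : ℝ, Real.exp (-2 * t * |x - y|) ∂μ) / Real.log t : ℝ) : EReal))
        Filter.atTop := by
  refine le_limsup_of_frequently_le ?_ ?_
  · exact (hfr.mp (stmt18_coreL μ x hx hγ)).mono fun t ht => EReal.coe_le_coe_iff.2 ht
  · isBoundedDefault

private lemma stmt18_keyZero (μ : Measure ℝ) [IsFiniteMeasure μ] (x : ℝ)
    (hx : ∀ ε > (0 : ℝ), 0 < μ (Metric.ball x ε)) :
    Filter.limsup (fun t : ℝ =>
        ((Real.log (∫ y : ℝ, Real.exp (-2 * t * |x - y|) ∂μ) / Real.log t : ℝ) : EReal))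
        Filter.atTop ≤ (0 : EReal) := by
  refine stmt18_le_of_forall _ _ fun c hc => ?_
  have hc0 : (0 : ℝ) < c := by exact_mod_cast hc
  set C : ℝ := (μ Set.univ).toReal with hCdef
  have hev : ∀ᶠ t : ℝ in atTop,
      Real.log (∫ y : ℝ, Real.exp (-2 * t * |x - y|) ∂μ) / Real.log t ≤ c := by
    filter_upwards [eventually_gt_atTop (1 : ℝ),
      Real.tendsto_log_atTop.eventually_ge_atTop (|Real.log C| / c)] with t ht1 ht2
    have ht0 : (0 : ℝ) < t := lt_trans one_pos ht1
    have hlt0 : 0 < Real.log t := Real.log_pos ht1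
    have hFpos := stmt18_F_pos μ x hx ht0
    have hlog : Real.log (∫ y : ℝ, Real.exp (-2 * t * |x - y|) ∂μ) ≤ Real.log C :=
      Real.log_le_log hFpos (stmt18_F_le μ x ht0.le)
    rw [div_le_iff₀ hlt0]
    rw [div_le_iff₀ hc0] at ht2
    calc Real.log (∫ y : ℝ, Real.exp (-2 * t * |x - y|) ∂μ) ≤ Real.log C := hlog
      _ ≤ |Real.log C| := le_abs_self _
      _ ≤ c * Real.log t := by nlinarith
  refine limsup_le_of_le ?_ ?_
  · isBoundedDefault
  · exact hev.mono fun t ht => EReal.coe_le_coe_iff.2 ht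

/-- For a finite Borel measure `μ` and `x` with `μ(B(x;ε)) > 0` for all
`ε > 0`, `liminf ln(∫ e^{-2t|x-y|}dμ)/ln t = -d⁺_μ(x)` and
`limsup ln(∫ e^{-2t|x-y|}dμ)/ln t = -d⁻_μ(x)`. -/
theorem stmt_18 (μ : Measure ℝ) [IsFiniteMeasure μ] (x : ℝ)
    (hx : ∀ ε > (0 : ℝ), 0 < μ (Metric.ball x ε)) :
    Filter.liminf (fun t : ℝ =>
        ((Real.log (∫ y : ℝ, Real.exp (-2 * t * |x - y|) ∂μ) / Real.log t : ℝ) : EReal))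
        Filter.atTop = -(dUp μ x) ∧
      Filter.limsup (fun t : ℝ =>
        ((Real.log (∫ y : ℝ, Real.exp (-2 * t * |x - y|) ∂μ) / Real.log t : ℝ) : EReal))
        Filter.atTop = -(dLow μ x) := by
  have hcond : ¬ ∃ ε > (0 : ℝ), μ (Metric.ball x ε) = 0 := by
    push_neg
    exact fun ε hε => (hx ε hε).ne'
  have hDup : dUp μ x = Filter.limsup (fun t : ℝ =>
      ((Real.log ((μ (Metric.ball x t⁻¹)).toReal) / Real.log t⁻¹ : ℝ) : EReal)) atTop := by
    rw [dUp, if_neg hcond, ← stmt18_map_inv]; rfl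
  have hDlow : dLow μ x = Filter.liminf (fun t : ℝ =>
      ((Real.log ((μ (Metric.ball x t⁻¹)).toReal) / Real.log t⁻¹ : ℝ) : EReal)) atTop := by
    rw [dLow, if_neg hcond, ← stmt18_map_inv]; rfl
  constructor
  · rw [hDup]
    apply le_antisymm
    · refine stmt18_le_of_forall _ _ fun c hc => ?_
      have hc' : ((-c : ℝ) : EReal) < Filter.limsup (fun t : ℝ =>
          ((Real.log ((μ (Metric.ball x t⁻¹)).toReal) / Real.log t⁻¹ : ℝ) : EReal)) atTop := by
        rw [EReal.coe_neg]
        exact EReal.neg_lt_comm.1 hc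
      rcases le_or_gt 0 c with h0 | h0
      · refine le_trans (liminf_le_limsup) (le_trans (stmt18_keyZero μ x hx) ?_)
        exact_mod_cast h0
      · obtain ⟨γ', h1, h2⟩ := EReal.exists_between_coe_real hc'
        have h3 : -c < γ' := EReal.coe_lt_coe_iff.1 h1
        have hfr := frequently_lt_of_lt_limsup (by isBoundedDefault) h2
        have hfr' : ∃ᶠ t : ℝ in atTop,
            γ' < Real.log ((μ (Metric.ball x t⁻¹)).toReal) / Real.log t⁻¹ :=
          hfr.mono fun t ht => EReal.coe_lt_coe_iff.1 ht
        have := stmt18_keyU μ x hx (by linarith : (0:ℝ) < -c) h3 hfr'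
        rwa [neg_neg] at this
    · refine stmt18_le_of_forall' _ _ fun c hc => ?_
      have hc' : Filter.limsup (fun t : ℝ =>
          ((Real.log ((μ (Metric.ball x t⁻¹)).toReal) / Real.log t⁻¹ : ℝ) : EReal)) atTop
          < ((-c : ℝ) : EReal) := by
        rw [EReal.coe_neg]
        exact EReal.lt_neg_comm.1 hc
      obtain ⟨γ', h1, h2⟩ := EReal.exists_between_coe_real hc'
      have h3 : γ' < -c := EReal.coe_lt_coe_iff.1 h2
      have hev := eventually_lt_of_limsup_lt h1 (by isBoundedDefault)
      have hev' : ∀ᶠ t : ℝ in atTop,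
          Real.log ((μ (Metric.ball x t⁻¹)).toReal) / Real.log t⁻¹ < γ' :=
        hev.mono fun t ht => EReal.coe_lt_coe_iff.1 ht
      have := stmt18_keyL1 μ x hx h3 hev'
      rwa [neg_neg] at this
  · rw [hDlow]
    apply le_antisymm
    · refine stmt18_le_of_forall _ _ fun c hc => ?_
      have hc' : ((-c : ℝ) : EReal) < Filter.liminf (fun t : ℝ =>
          ((Real.log ((μ (Metric.ball x t⁻¹)).toReal) / Real.log t⁻¹ : ℝ) : EReal)) atTop := by
        rw [EReal.coe_neg]
        exact EReal.neg_lt_comm.1 hc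
      rcases le_or_gt 0 c with h0 | h0
      · refine le_trans (stmt18_keyZero μ x hx) ?_
        exact_mod_cast h0
      · obtain ⟨γ', h1, h2⟩ := EReal.exists_between_coe_real hc'
        have h3 : -c < γ' := EReal.coe_lt_coe_iff.1 h1
        have hev := eventually_lt_of_lt_liminf h2 (by isBoundedDefault)
        have hev' : ∀ᶠ t : ℝ in atTop,
            γ' < Real.log ((μ (Metric.ball x t⁻¹)).toReal) / Real.log t⁻¹ :=
          hev.mono fun t ht => EReal.coe_lt_coe_iff.1 ht
        have := stmt18_keyU' μ x hx (by linarith : (0:ℝ) < -c) h3 hev'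
        rwa [neg_neg] at this
    · refine stmt18_le_of_forall' _ _ fun c hc => ?_
      have hc' : Filter.liminf (fun t : ℝ =>
          ((Real.log ((μ (Metric.ball x t⁻¹)).toReal) / Real.log t⁻¹ : ℝ) : EReal)) atTop
          < ((-c : ℝ) : EReal) := by
        rw [EReal.coe_neg]
        exact EReal.lt_neg_comm.1 hc
      obtain ⟨γ', h1, h2⟩ := EReal.exists_between_coe_real hc'
      have h3 : γ' < -c := EReal.coe_lt_coe_iff.1 h2
      have hfr := frequently_lt_of_liminf_lt (by isBoundedDefault) h1
      have hfr' : ∃ᶠ t : ℝ in atTop,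
          Real.log ((μ (Metric.ball x t⁻¹)).toReal) / Real.log t⁻¹ < γ' :=
        hfr.mono fun t ht => EReal.coe_lt_coe_iff.1 ht
      have := stmt18_keyL2 μ x hx h3 hfr'
      rwa [neg_neg] at this
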